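/- In dimension 1, for any finite set Q = {x_1 < x_2 < ⋯ < x_k} ⊆ [0,1], the star discrepancy satisfies d*(Q) = 1/(2k) + max_{i=1..k} |x_i − (2i−1)/(2k)| (Niederreiter's formula). -/

import Mathlib

open Finset
open scoped Classical

/-- Number of points of `Q` in `[0,q)`. -/
noncomputable def D1open (q : ℝ) (Q : Finset ℝ) : ℕ := (Q.filter fun p => p < q).card

/-- Number of points of `Q` in `[0,q]`. -/
noncomputable def D1closed (q : ℝ) (Q : Finset ℝ) : ℕ := (Q.filter fun p => p ≤ q).card

/-- One-dimensional L∞ star discrepancy (supremum of local discrepancies). -/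
noncomputable def starDisc1 (Q : Finset ℝ) : ℝ :=
  ⨆ q ∈ Set.Icc (0 : ℝ) 1,
    max (q - (D1open q Q : ℝ) / Q.card) ((D1closed q Q : ℝ) / Q.card - q)

/-- Niederreiter's formula for the one-dimensional star discrepancy. -/
theorem stmt18 (k : ℕ) (hk : 0 < k) (x : Fin k → ℝ) (hmono : StrictMono x)
    (hx : ∀ i, x i ∈ Set.Icc (0 : ℝ) 1) :
    starDisc1 (Finset.univ.image x)
      = 1 / (2 * k) + ⨆ i : Fin k, |x i - (2 * (i : ℝ) + 1) / (2 * k)| := by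
  have hkpos : (0:ℝ) < k := Nat.cast_pos.mpr hk
  have hk0 : (k:ℝ) ≠ 0 := ne_of_gt hkpos
  have hinj : Function.Injective x := hmono.injective
  set Q : Finset ℝ := Finset.univ.image x with hQdef
  have hcard : (Q.card : ℝ) = k := by
    simp [hQdef, Finset.card_image_of_injective _ hinj]
  -- counting via indices
  have hA : ∀ q : ℝ, D1open q Q = (univ.filter fun i => x i < q).card := by
    intro q
    rw [D1open, hQdef, Finset.filter_image, Finset.card_image_of_injective _ hinj]
  have hB : ∀ q : ℝ, D1closed q Q = (univ.filter fun i => x i ≤ q).card := by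
    intro q
    rw [D1closed, hQdef, Finset.filter_image, Finset.card_image_of_injective _ hinj]
  -- the comparison function
  set h : Fin k → ℝ := fun i => max (x i - (i:ℝ)/k) (((i:ℝ)+1)/k - x i) with hh
  have hbddh : BddAbove (Set.range h) := (Set.finite_range h).bddAbove
  set S : ℝ := ⨆ i, h i with hS
  have hSge : ∀ i, h i ≤ S := fun i => le_ciSup hbddh i
  haveI : Nonempty (Fin k) := ⟨⟨0, hk⟩⟩
  have hhpos : ∀ i, 1/(2*(k:ℝ)) ≤ h i := by
    intro i
    have h1 := le_max_left (x i - (i:ℝ)/k) (((i:ℝ)+1)/k - x i)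
    have h2 := le_max_right (x i - (i:ℝ)/k) (((i:ℝ)+1)/k - x i)
    have hsum : (x i - (i:ℝ)/k) + (((i:ℝ)+1)/k - x i) = 1/k := by field_simp; ring
    have heq : 1/(2*(k:ℝ)) = (1/(k:ℝ))/2 := by ring
    show 1/(2*(k:ℝ)) ≤ max (x i - (i:ℝ)/k) (((i:ℝ)+1)/k - x i)
    linarith [h1, h2]
  have hS0 : (0:ℝ) ≤ S := le_trans (le_trans (by positivity) (hhpos ⟨0, hk⟩)) (hSge ⟨0, hk⟩)
  -- key counting lemmas
  have hAle : ∀ q : ℝ, (univ.filter fun i => x i < q).card ≤ k := by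
    intro q; simpa using Finset.card_filter_le univ (fun i => x i < q)
  have hBle : ∀ q : ℝ, (univ.filter fun i => x i ≤ q).card ≤ k := by
    intro q; simpa using Finset.card_filter_le univ (fun i => x i ≤ q)
  have hAlt : ∀ (q : ℝ) (j : Fin k), x j < q →
      (j:ℕ) < (univ.filter fun i => x i < q).card := by
    intro q j hj
    have hsub : Finset.Iic j ⊆ univ.filter fun i => x i < q := by
      intro i hi
      simp only [Finset.mem_filter, Finset.mem_univ, true_and]
      exact lt_of_le_of_lt (hmono.monotone (Finset.mem_Iic.mp hi)) hj
    have := Finset.card_le_card hsub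
    rw [Fin.card_Iic j] at this
    omega
  have hBge : ∀ (q : ℝ) (j : Fin k),
      (j:ℕ) < (univ.filter fun i => x i ≤ q).card → x j ≤ q := by
    intro q j hj
    by_contra hcon
    push_neg at hcon
    have hsub : (univ.filter fun i => x i ≤ q) ⊆ Finset.Iio j := by
      intro i hi
      simp only [Finset.mem_filter, Finset.mem_univ, true_and] at hi
      exact Finset.mem_Iio.mpr (hmono.lt_iff_lt.mp (lt_of_le_of_lt hi hcon))
    have := Finset.card_le_card hsub
    rw [Fin.card_Iio j] at this
    omega
  -- the local discrepancy is bounded by S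
  have hfle : ∀ q ∈ Set.Icc (0:ℝ) 1,
      max (q - (D1open q Q : ℝ) / Q.card) ((D1closed q Q : ℝ) / Q.card - q) ≤ S := by
    intro q hq
    rw [hcard, hA, hB]
    apply max_le
    · -- open part
      set A := (univ.filter fun i => x i < q).card with hAdef
      by_cases hAk : A < k
      · set j : Fin k := ⟨A, hAk⟩ with hj
        have hqle : q ≤ x j := by
          by_contra hcon
          push_neg at hcon
          have := hAlt q j hcon
          simp [hj, ← hAdef] at this
        have h1 : q - (A:ℝ)/k ≤ x j - (j:ℕ)/k := by
          have : ((j:ℕ):ℝ) = (A:ℝ) := by simp [hj]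
          rw [this]; linarith
        exact le_trans h1 (le_trans (le_max_left _ _) (hSge j))
      · have hAk' : A = k := le_antisymm (hAle q) (not_lt.mp hAk)
        have : q - (A:ℝ)/k ≤ 0 := by
          rw [hAk', div_self hk0]
          linarith [hq.2]
        linarith
    · -- closed part
      set B := (univ.filter fun i => x i ≤ q).card with hBdef
      by_cases hB0 : 0 < B
      · have hBk : B - 1 < k := by have := hBle q; omega
        set j : Fin k := ⟨B - 1, hBk⟩ with hj
        have hxle : x j ≤ q := by
          apply hBge q j
          simp only [hj]
          omega
        have hcast : ((j:ℕ):ℝ) + 1 = (B:ℝ) := by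
          simp only [hj]
          push_cast [Nat.cast_sub hB0]
          ring
        have h1 : (B:ℝ)/k - q ≤ (((j:ℕ):ℝ) + 1)/k - x j := by
          rw [hcast]; linarith
        exact le_trans h1 (le_trans (le_max_right _ _) (hSge j))
      · have : B = 0 := by omega
        rw [this]
        simp only [Nat.cast_zero, zero_div, zero_sub]
        linarith [hq.1]
  -- starDisc1 Q = S
  have hmain : starDisc1 Q = S := by
    apply le_antisymm
    · apply Real.iSup_le _ hS0
      intro q
      exact Real.iSup_le (fun hq => hfle q hq) hS0
    · apply ciSup_le
      intro i
      have hAx : (univ.filter fun j => x j < x i).card = (i:ℕ) := by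
        have : (univ.filter fun j => x j < x i) = Finset.Iio i := by
          ext j
          simp [hmono.lt_iff_lt]
        rw [this, Fin.card_Iio i]
      have hBx : (univ.filter fun j => x j ≤ x i).card = (i:ℕ) + 1 := by
        have : (univ.filter fun j => x j ≤ x i) = Finset.Iic i := by
          ext j
          simp [hmono.le_iff_le]
        rw [this, Fin.card_Iic i]
      have hgx : (⨆ _ : x i ∈ Set.Icc (0:ℝ) 1,
          max (x i - (D1open (x i) Q : ℝ) / Q.card) ((D1closed (x i) Q : ℝ) / Q.card - x i)) = h i := by
        rw [ciSup_pos (hx i), hcard, hA, hB, hAx, hBx]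
        show _ = max (x i - (i:ℝ)/k) (((i:ℝ)+1)/k - x i)
        push_cast
        ring_nf
      have hbddg : BddAbove (Set.range fun q => ⨆ _ : q ∈ Set.Icc (0:ℝ) 1,
          max (q - (D1open q Q : ℝ) / Q.card) ((D1closed q Q : ℝ) / Q.card - q)) := by
        refine ⟨S, ?_⟩
        rintro _ ⟨q, rfl⟩
        exact Real.iSup_le (fun hq => hfle q hq) hS0
      calc h i = _ := hgx.symm
        _ ≤ starDisc1 Q := le_ciSup hbddg (x i)
  -- S equals the RHS
  rw [hmain]
  have hkey : ∀ i : Fin k, h i = 1/(2*(k:ℝ)) + |x i - (2*(i:ℝ)+1)/(2*k)| := by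
    intro i
    rw [hh, abs_eq_max_neg, ← max_add_add_left]
    congr 1 <;> field_simp <;> ring
  set T : ℝ := ⨆ i, |x i - (2*(i:ℝ)+1)/(2*(k:ℝ))| with hT
  have hbddT : BddAbove (Set.range fun i : Fin k => |x i - (2*(i:ℝ)+1)/(2*(k:ℝ))|) :=
    (Set.finite_range _).bddAbove
  have hTge : ∀ i : Fin k, |x i - (2*(i:ℝ)+1)/(2*(k:ℝ))| ≤ T := fun i => le_ciSup hbddT i
  apply le_antisymm
  · apply ciSup_le
    intro i
    rw [hkey i]
    exact add_le_add_right (hTge i) _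
  · have hTS : T ≤ S - 1/(2*(k:ℝ)) := by
      apply ciSup_le
      intro i
      have := hSge i
      rw [hkey i] at this
      linarith
    linarith
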